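/- Let X₁,…,Xₙ be ℕ-valued random variables on a probability space with 0 < E[X₁] < ∞, S = X₁+⋯+Xₙ and S₋₁ = X₂+⋯+Xₙ, and suppose X₁ is independent of S₋₁. Then for every k ∈ ℕ, E[X₁ · 1_{\{S=k\}}] = E[X₁] · ∑_{j=0}^{k} f_{X̃₁}(j) · P(S₋₁ = k−j), where f_{X̃₁}(j) = j · P(X₁ = j) / E[X₁] is the probability mass function of the size-biased transform of X₁; that is, E[X₁ · 1_{\{S=k\}}] equals E[X₁] times the probability that an independent sum of the size-biased transform of X₁ and S₋₁ equals k. -/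

import Mathlib

open MeasureTheory ProbabilityTheory

/-- If `X₁` is independent of `S₋₁` and `0 < E[X₁] < ∞`, then for every `k`,
`E[X₁ · 1_{S=k}] = E[X₁] ∑_{j=0}^{k} f_{X̃₁}(j) P(S₋₁ = k-j)` where
`f_{X̃₁}(j) = j P(X₁ = j)/E[X₁]` is the pmf of the size-biased transform of `X₁`; that is,
the expected allocation equals `E[X₁]` times the probability that an independent sum of the
size-biased transform of `X₁` and `S₋₁` equals `k`. -/
theorem expected_allocation_size_biased
    {Ω : Type*} [MeasurableSpace Ω] (μ : Measure Ω) [IsProbabilityMeasure μ]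
    (n : ℕ) (X : Fin (n + 1) → Ω → ℕ) (hX : ∀ i, Measurable (X i))
    (hint : Integrable (fun ω => (X 0 ω : ℝ)) μ)
    (hpos : 0 < ∫ ω, (X 0 ω : ℝ) ∂μ)
    (S Sm : Ω → ℕ)
    (hS : ∀ ω, S ω = ∑ i, X i ω)
    (hSm : ∀ ω, Sm ω = ∑ i : Fin n, X i.succ ω)
    (hindep : IndepFun (X 0) Sm μ) :
    ∀ k : ℕ,
      ∫ ω in {ω | S ω = k}, (X 0 ω : ℝ) ∂μ
        = (∫ ω, (X 0 ω : ℝ) ∂μ) *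
            ∑ j ∈ Finset.range (k + 1),
              (j * (μ {ω | X 0 ω = j}).toReal / ∫ ω, (X 0 ω : ℝ) ∂μ)
                * (μ {ω | Sm ω = k - j}).toReal := by
  intro k
  have hSmm : Measurable Sm := by
    have h : Sm = fun ω => ∑ i : Fin n, X i.succ ω := funext hSm
    rw [h]
    exact Finset.measurable_sum _ fun i _ => hX i.succ
  have hEne : (∫ ω, (X 0 ω : ℝ) ∂μ) ≠ 0 := ne_of_gt hpos
  have hkey : ∀ ω, S ω = X 0 ω + Sm ω := by
    intro ω; rw [hS, hSm, Fin.sum_univ_succ]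
  have hmeas : ∀ j : ℕ, MeasurableSet ({ω | X 0 ω = j} ∩ {ω | Sm ω = k - j}) :=
    fun j => ((hX 0) (measurableSet_singleton j)).inter
      (hSmm (measurableSet_singleton (k - j)))
  have hset : {ω | S ω = k}
      = ⋃ j ∈ Finset.range (k + 1), ({ω | X 0 ω = j} ∩ {ω | Sm ω = k - j}) := by
    ext ω
    simp only [Set.mem_setOf_eq, Set.mem_iUnion, Set.mem_inter_iff, Finset.mem_range, hkey]
    constructor
    · rintro rfl
      exact ⟨X 0 ω, by omega, rfl, by omega⟩
    · rintro ⟨j, hj, h1, h2⟩; omega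
  rw [hset, MeasureTheory.integral_biUnion_finset _ (fun j _ => hmeas j)
    (fun i _ j _ hij => Set.disjoint_left.2 (by
      rintro ω ⟨h1, -⟩ ⟨h2, -⟩
      exact hij (h1 ▸ h2 ▸ rfl)))
    (fun j _ => hint.integrableOn)]
  have hterm : ∀ j : ℕ,
      ∫ ω in {ω | X 0 ω = j} ∩ {ω | Sm ω = k - j}, (X 0 ω : ℝ) ∂μ
        = j * (μ {ω | X 0 ω = j}).toReal * (μ {ω | Sm ω = k - j}).toReal := by
    intro j
    have hμ : μ ({ω | X 0 ω = j} ∩ {ω | Sm ω = k - j})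
        = μ {ω | X 0 ω = j} * μ {ω | Sm ω = k - j} :=
      hindep.measure_inter_preimage_eq_mul {j} {k - j}
        (measurableSet_singleton j) (measurableSet_singleton (k - j))
    rw [setIntegral_congr_fun (hmeas j) (g := fun _ => (j : ℝ))
        (fun ω hω => by exact_mod_cast congrArg Nat.cast hω.1),
      setIntegral_const, measureReal_def, hμ, ENNReal.toReal_mul, smul_eq_mul]
    ring
  rw [Finset.mul_sum]
  refine Finset.sum_congr rfl fun j _ => ?_
  rw [hterm j]
  field_simp
  try ring
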